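/- Let p be a prime. The map v ↦ L_v from vertices of G to lines of ℒ is injective: for any two distinct vertices v, v' ∈ Sym2 X, the lines L_v and L_{v'} are distinct. -/

import Mathlib

/-- Points of the concretely-defined finite projective plane of order `p`:
one point `alpha`, the points `beta y`, and the points `gamma x y`. -/
inductive ProjPoint (p : ℕ) : Type where
  | alpha : ProjPoint p
  | beta (y : ZMod p) : ProjPoint p
  | gamma (x y : ZMod p) : ProjPoint p

namespace ProjPoint

/-- The line `L_α = {P_α} ∪ {P_β(y) : y}`. -/
def Lalpha (p : ℕ) : Set (ProjPoint p) :=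
  {P | P = alpha ∨ ∃ y : ZMod p, P = beta y}

/-- The line `L_β(i) = {P_α} ∪ {P_γ(i,y) : y}`. -/
def Lbeta (p : ℕ) (i : ZMod p) : Set (ProjPoint p) :=
  {P | P = alpha ∨ ∃ y : ZMod p, P = gamma i y}

/-- The line `L_γ(i,j) = {P_β(i)} ∪ {P_γ(k, i·k + j) : k}`. -/
def Lgamma (p : ℕ) (i j : ZMod p) : Set (ProjPoint p) :=
  {P | P = beta i ∨ ∃ k : ZMod p, P = gamma k (i * k + j)}

/-- The set of lines `ℒ`. -/
def Lines (p : ℕ) : Set (Set (ProjPoint p)) :=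
  {Lalpha p} ∪ {L | ∃ i : ZMod p, L = Lbeta p i} ∪
    {L | ∃ i j : ZMod p, L = Lgamma p i j}

/-- The set `S = {P_α} ∪ {P_γ(k, k²) : k}`. -/
def S (p : ℕ) : Set (ProjPoint p) :=
  {P | P = alpha ∨ ∃ k : ZMod p, P = gamma k (k ^ 2)}

end ProjPoint

namespace ProjPoint

/-- Indexing of `S` by `X = Option (ZMod p)`: `Spt none = P_α` and
`Spt (some k) = P_γ(k, k²)`. -/
def Spt (p : ℕ) : Option (ZMod p) → ProjPoint p
  | none => alpha
  | some k => gamma k (k ^ 2)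

/-- The graph `G` on unordered pairs (diagonal allowed) from `X = Option (ZMod p)`,
where two distinct vertices are adjacent iff no element of `X` belongs to both. -/
def G (p : ℕ) : SimpleGraph (Sym2 (Option (ZMod p))) where
  Adj v w := v ≠ w ∧ ∀ x : Option (ZMod p), ¬(x ∈ v ∧ x ∈ w)
  symm := ⟨fun v w h => ⟨h.1.symm, fun x hx => h.2 x ⟨hx.2, hx.1⟩⟩⟩
  loopless := ⟨fun v h => h.1 rfl⟩

end ProjPoint

/-- The map `v ↦ L_v` is injective, where `L_v` is the unique line of `ℒ` through
`S(l)` and `S(l')` for an off-diagonal vertex `v = s(l, l')`, and the unique line of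
`ℒ` passing `S(l)` and no other point of `S` for a diagonal vertex `v = s(l, l)`. -/
theorem line_map_injective (p : ℕ) [Fact p.Prime]
    (Lv : Sym2 (Option (ZMod p)) → Set (ProjPoint p))
    (hLine : ∀ v, Lv v ∈ ProjPoint.Lines p)
    (hoff : ∀ l l' : Option (ZMod p), l ≠ l' →
      ProjPoint.Spt p l ∈ Lv s(l, l') ∧ ProjPoint.Spt p l' ∈ Lv s(l, l'))
    (hdiag : ∀ l : Option (ZMod p), ProjPoint.Spt p l ∈ Lv s(l, l) ∧
      ∀ t ∈ ProjPoint.S p, t ∈ Lv s(l, l) → t = ProjPoint.Spt p l) :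
    Function.Injective Lv := by
  classical
  -- Spt is injective
  have hSptinj : Function.Injective (ProjPoint.Spt p) := by
    intro a b hab
    cases a <;> cases b <;> simp_all [ProjPoint.Spt]
  -- every Spt value is in S
  have hS : ∀ x : Option (ZMod p), ProjPoint.Spt p x ∈ ProjPoint.S p := by
    intro x
    cases x with
    | none => exact Or.inl rfl
    | some k => exact Or.inr ⟨k, rfl⟩
  -- a line contains at most two points of S (indexed)
  have key : ∀ L ∈ ProjPoint.Lines p, ∀ x y z : Option (ZMod p),
      ProjPoint.Spt p x ∈ L → ProjPoint.Spt p y ∈ L → ProjPoint.Spt p z ∈ L →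
      x = y ∨ x = z ∨ y = z := by
    intro L hL x y z hx hy hz
    rcases hL with (hL | ⟨i, hL⟩) | ⟨i, j, hL⟩
    · -- Lalpha : only `none` maps into it
      simp only [Set.mem_singleton_iff] at hL
      subst hL
      have h1 : ∀ w : Option (ZMod p), ProjPoint.Spt p w ∈ ProjPoint.Lalpha p → w = none := by
        intro w hw
        cases w with
        | none => rfl
        | some k => rcases hw with h | ⟨y, h⟩ <;> simp [ProjPoint.Spt] at h
      exact Or.inl ((h1 x hx).trans (h1 y hy).symm)
    · -- Lbeta i : only `none` and `some i`
      subst hL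
      have h1 : ∀ w : Option (ZMod p), ProjPoint.Spt p w ∈ ProjPoint.Lbeta p i →
          w = none ∨ w = some i := by
        intro w hw
        cases w with
        | none => exact Or.inl rfl
        | some k =>
          rcases hw with h | ⟨y, h⟩
          · simp [ProjPoint.Spt] at h
          · simp only [ProjPoint.Spt, ProjPoint.gamma.injEq] at h
            exact Or.inr (by rw [h.1])
      rcases h1 x hx with hx' | hx' <;> rcases h1 y hy with hy' | hy' <;>
        rcases h1 z hz with hz' | hz' <;> simp_all
    · -- Lgamma i j : the quadratic k² = i*k + j has at most two roots
      subst hL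
      have h1 : ∀ w : Option (ZMod p), ProjPoint.Spt p w ∈ ProjPoint.Lgamma p i j →
          ∃ k : ZMod p, w = some k ∧ k ^ 2 = i * k + j := by
        intro w hw
        cases w with
        | none => rcases hw with h | ⟨k, h⟩ <;> simp [ProjPoint.Spt] at h
        | some a =>
          rcases hw with h | ⟨k, h⟩
          · simp [ProjPoint.Spt] at h
          · simp only [ProjPoint.Spt, ProjPoint.gamma.injEq] at h
            exact ⟨a, rfl, h.1 ▸ h.2⟩
      obtain ⟨a, rfl, ha⟩ := h1 x hx
      obtain ⟨b, rfl, hb⟩ := h1 y hy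
      obtain ⟨c, rfl, hc⟩ := h1 z hz
      by_contra hcon
      push_neg at hcon
      obtain ⟨hab, hac, hbc⟩ := hcon
      have hab' : a ≠ b := fun h => hab (by rw [h])
      have hac' : a ≠ c := fun h => hac (by rw [h])
      have hbc' : b ≠ c := fun h => hbc (by rw [h])
      have e1 : (a - b) * (a + b - i) = 0 := by linear_combination ha - hb
      have e2 : (a - c) * (a + c - i) = 0 := by linear_combination ha - hc
      have f1 : a + b - i = 0 := by
        rcases mul_eq_zero.mp e1 with h | h
        · exact absurd (sub_eq_zero.mp h) hab'
        · exact h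
      have f2 : a + c - i = 0 := by
        rcases mul_eq_zero.mp e2 with h | h
        · exact absurd (sub_eq_zero.mp h) hac'
        · exact h
      exact hbc' (by linear_combination f1 - f2)
  -- main argument
  intro v v' heq
  induction v using Sym2.inductionOn with
  | hf a b =>
  induction v' using Sym2.inductionOn with
  | hf c d =>
  by_cases hab : a = b <;> by_cases hcd : c = d
  · subst hab; subst hcd
    have hc : ProjPoint.Spt p c ∈ Lv s(a, a) := heq ▸ (hdiag c).1
    have := (hdiag a).2 _ (hS c) hc
    rw [hSptinj this]
  · subst hab
    have hc : ProjPoint.Spt p c ∈ Lv s(a, a) := heq ▸ (hoff c d hcd).1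
    have hd : ProjPoint.Spt p d ∈ Lv s(a, a) := heq ▸ (hoff c d hcd).2
    have hc' := hSptinj ((hdiag a).2 _ (hS c) hc)
    have hd' := hSptinj ((hdiag a).2 _ (hS d) hd)
    exact absurd (hc'.trans hd'.symm) hcd
  · subst hcd
    have ha : ProjPoint.Spt p a ∈ Lv s(c, c) := heq ▸ (hoff a b hab).1
    have hb : ProjPoint.Spt p b ∈ Lv s(c, c) := heq ▸ (hoff a b hab).2
    have ha' := hSptinj ((hdiag c).2 _ (hS a) ha)
    have hb' := hSptinj ((hdiag c).2 _ (hS b) hb)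
    exact absurd (ha'.trans hb'.symm) hab
  · have ha : ProjPoint.Spt p a ∈ Lv s(a, b) := (hoff a b hab).1
    have hb : ProjPoint.Spt p b ∈ Lv s(a, b) := (hoff a b hab).2
    have hc : ProjPoint.Spt p c ∈ Lv s(a, b) := heq ▸ (hoff c d hcd).1
    have hd : ProjPoint.Spt p d ∈ Lv s(a, b) := heq ▸ (hoff c d hcd).2
    have k1 := key _ (hLine s(a, b)) a b c ha hb hc
    have k2 := key _ (hLine s(a, b)) a b d ha hb hd
    rw [Sym2.eq_iff]
    rcases k1 with h | h | h
    · exact absurd h hab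
    · rcases k2 with h' | h' | h'
      · exact absurd h' hab
      · exact absurd (h ▸ h' ▸ rfl : c = d) hcd
      · exact Or.inl ⟨h, h'⟩
    · rcases k2 with h' | h' | h'
      · exact absurd h' hab
      · exact Or.inr ⟨h', h⟩
      · exact absurd (h ▸ h' ▸ rfl : c = d) hcd
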